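/- Let (N,d) be a CAT(0) space, P,Q,R,S ∈ N, with Q_t the constant-speed geodesic from Q to R on [0,1]. Then for all t, s ∈ [0,1]: d²(P, Q_t) + d²(S, Q_{1−t}) ≤ d_{PQ}² + d_{RS}² + t(d_{SP}² − d_{QR}²) + 2t² d_{QR}² − t[ s(d_{SP} − d_{QR})² + (1−s)(d_{RS} − d_{PQ})² ], where d_{AB} = d(A,B). -/

import Mathlib

/-- A constant-speed geodesic from `p` to `q`, parametrized on `[0,1]`. -/
def IsGeodesic {N : Type*} [MetricSpace N] (g : ℝ → N) (p q : N) : Prop :=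
  g 0 = p ∧ g 1 = q ∧
    ∀ s ∈ Set.Icc (0:ℝ) 1, ∀ t ∈ Set.Icc (0:ℝ) 1, dist (g s) (g t) = |s - t| * dist p q

/-- A complete geodesic metric space is CAT(0) (nonpositive Alexandrov curvature) if
geodesics exist and satisfy the comparison inequality
`d(x, g t)² ≤ (1−t)d(x,p)² + t d(x,q)² − t(1−t)d(p,q)²`. -/
def IsCAT0 (N : Type*) [MetricSpace N] [CompleteSpace N] : Prop :=
  (∀ p q : N, ∃ g : ℝ → N, IsGeodesic g p q) ∧
  ∀ (p q : N) (g : ℝ → N), IsGeodesic g p q → ∀ x : N, ∀ t ∈ Set.Icc (0:ℝ) 1,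
    dist x (g t) ^ 2 ≤ (1 - t) * dist x p ^ 2 + t * dist x q ^ 2
      - t * (1 - t) * dist p q ^ 2

lemma quad_ineq {N : Type*} [MetricSpace N] [CompleteSpace N] (hN : IsCAT0 N)
    (P Q R S : N) :
    dist P R ^ 2 + dist Q S ^ 2 ≤ dist P Q ^ 2 + dist R S ^ 2 + 2 * dist P S * dist Q R := by
  by_cases hQ : Q = R
  · subst hQ; simp [dist_self]
  by_cases hPS : P = S
  · subst hPS
    rw [dist_comm Q P, dist_comm R P]
    simp only [dist_self, mul_zero, zero_mul, add_zero]
    linarith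
  obtain ⟨hex, hcomp⟩ := hN
  obtain ⟨α, hα⟩ := hex R P
  obtain ⟨β, hβ⟩ := hex Q S
  have hL : (0:ℝ) < dist Q R := dist_pos.2 hQ
  have hm : (0:ℝ) < dist P S := dist_pos.2 hPS
  have hc : (0:ℝ) < dist Q R + dist P S := by linarith
  have hT0 : (0:ℝ) ≤ dist Q R / (dist Q R + dist P S) := by positivity
  have hT1 : dist Q R / (dist Q R + dist P S) ≤ 1 := (div_le_one hc).2 (by linarith)
  set T := dist Q R / (dist Q R + dist P S) with hTdef
  have hTmem : T ∈ Set.Icc (0:ℝ) 1 := ⟨hT0, hT1⟩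
  have h1 := hcomp Q S β hβ (α T) T hTmem
  have h2 := hcomp R P α hα Q T hTmem
  have h3 := hcomp R P α hα S T hTmem
  rw [dist_comm (α T) Q, dist_comm (α T) S] at h1
  rw [dist_comm Q P, dist_comm R P] at h2
  rw [dist_comm S R, dist_comm S P, dist_comm R P] at h3
  have h2' := mul_le_mul_of_nonneg_left h2 (show (0:ℝ) ≤ 1 - T by linarith)
  have h3' := mul_le_mul_of_nonneg_left h3 hT0
  have hnn : (0:ℝ) ≤ dist (α T) (β T) ^ 2 := sq_nonneg _
  have K : 0 ≤ (1-T)^2 * dist Q R^2 + T*(1-T)*(dist P Q^2 + dist R S^2) + T^2 * dist P S^2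
      - T*(1-T)*(dist P R^2 + dist Q S^2) := by linarith [h1, h2', h3', hnn]
  have e1 : T * (dist Q R + dist P S) = dist Q R := div_mul_cancel₀ _ hc.ne'
  have e2 : (1 - T) * (dist Q R + dist P S) = dist P S := by
    rw [hTdef]; field_simp; ring
  have hK2 : (0:ℝ) ≤ (dist Q R + dist P S) * (dist Q R + dist P S) *
      ((1-T)^2 * dist Q R^2 + T*(1-T)*(dist P Q^2 + dist R S^2) + T^2 * dist P S^2
      - T*(1-T)*(dist P R^2 + dist Q S^2)) :=
    mul_nonneg (by positivity) K
  have key : (dist Q R + dist P S) * (dist Q R + dist P S) *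
      ((1-T)^2 * dist Q R^2 + T*(1-T)*(dist P Q^2 + dist R S^2) + T^2 * dist P S^2
      - T*(1-T)*(dist P R^2 + dist Q S^2))
      = ((1-T)*(dist Q R + dist P S))^2 * dist Q R^2
        + (T*(dist Q R + dist P S))*((1-T)*(dist Q R + dist P S))*(dist P Q^2 + dist R S^2)
        + (T*(dist Q R + dist P S))^2 * dist P S^2
        - (T*(dist Q R + dist P S))*((1-T)*(dist Q R + dist P S))*(dist P R^2 + dist Q S^2) := by
    ring
  rw [e1, e2] at key
  rw [key] at hK2
  nlinarith [hK2, mul_pos hL hm]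

/-- Korevaar–Schoen Corollary 2.1.3, second inequality: for a quadrilateral `P,Q,R,S` in
a CAT(0) space, with `Q_t` the constant-speed geodesic from `Q` to `R` on `[0,1]`, for
all `t, s ∈ [0,1]`:
`d²(P,Q_t) + d²(S,Q_{1−t}) ≤ d_{PQ}² + d_{RS}² + t(d_{SP}² − d_{QR}²) + 2t²d_{QR}²
  − t[s(d_{SP}−d_{QR})² + (1−s)(d_{RS}−d_{PQ})²]`. -/
theorem cat0_quadrilateral_endpoint_estimate {N : Type*} [MetricSpace N] [CompleteSpace N]
    (hN : IsCAT0 N) (P Q R S : N) (gQR : ℝ → N) (hQR : IsGeodesic gQR Q R)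
    (t s : ℝ) (ht : t ∈ Set.Icc (0:ℝ) 1) (hs : s ∈ Set.Icc (0:ℝ) 1) :
    dist P (gQR t) ^ 2 + dist S (gQR (1 - t)) ^ 2 ≤
      dist P Q ^ 2 + dist R S ^ 2 + t * (dist S P ^ 2 - dist Q R ^ 2)
        + 2 * t ^ 2 * dist Q R ^ 2
        - t * (s * (dist S P - dist Q R) ^ 2 + (1 - s) * (dist R S - dist P Q) ^ 2) := by
  obtain ⟨ht0, ht1⟩ := ht
  obtain ⟨hs0, hs1⟩ := hs
  have hP := hN.2 Q R gQR hQR P t ⟨ht0, ht1⟩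
  have hS := hN.2 Q R gQR hQR S (1 - t) ⟨by linarith, by linarith⟩
  rw [dist_comm S Q, dist_comm S R] at hS
  have q1 := quad_ineq hN P Q R S
  have q2 := quad_ineq hN Q R S P
  rw [dist_comm R P, dist_comm S P, dist_comm Q P] at q2
  have q1' := mul_le_mul_of_nonneg_left q1 (mul_nonneg ht0 hs0)
  have q2' := mul_le_mul_of_nonneg_left q2 (mul_nonneg ht0 (by linarith : (0:ℝ) ≤ 1 - s))
  rw [dist_comm S P]
  nlinarith [hP, hS, q1', q2']
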